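/- arXiv:2302.05902 — 5 statements merged into one kernel-verified Lean document; each statement's English description precedes it below -/
import Mathlib

section
/- Let N ≥ 5, ω = exp(2πi/N), and define ξ_{ij} ∈ ℂ^N as above. If i = k and j ≠ l, or i ≠ k and j = l, then ⟨ξ_{ij}, ξ_{kl}⟩ = 0. In particular, for each fixed i the vectors (ξ_{ij})_{j=1}^N form an orthonormal basis of ℂ^N, and for each fixed j the vectors (ξ_{ij})_{i=1}^N form an orthonormal basis of ℂ^N. -/
open Complex

/-- `ω = exp(2πi/N)`. -/
noncomputable def omegaN (N : ℕ) : ℂ := Complex.exp (2 * Real.pi * Complex.I / N)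

/-- The vector `ξ_{ij} ∈ ℂ^N`: coordinate `p` (for `p = 1, …, N`, encoded as `p : Fin N`
with value `p+1`) is `ω^{1-j}/√N` if `p = 1`, `ω^{i-1}/√N` if `p = N`,
and `ω^{p(i-j)}/√N` otherwise. -/
noncomputable def xiVec (N : ℕ) (i j : ℤ) : EuclideanSpace ℂ (Fin N) :=
  WithLp.toLp 2 fun p =>
    if (p : ℕ) = 0 then omegaN N ^ (1 - j) / (Real.sqrt N : ℂ)
    else if (p : ℕ) = N - 1 then omegaN N ^ (i - 1) / (Real.sqrt N : ℂ)
    else omegaN N ^ ((((p : ℕ) : ℤ) + 1) * (i - j)) / (Real.sqrt N : ℂ)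

lemma omegaN_prim {N : ℕ} (hN : N ≠ 0) : IsPrimitiveRoot (omegaN N) N :=
  Complex.isPrimitiveRoot_exp N hN

lemma omegaN_ne_zero {N : ℕ} : omegaN N ≠ 0 := Complex.exp_ne_zero _

lemma omegaN_zpow_eq_one {N : ℕ} (hN : N ≠ 0) {m : ℤ} (h : (N : ℤ) ∣ m) :
    omegaN N ^ m = 1 := ((omegaN_prim hN).zpow_eq_one_iff_dvd m).2 h

lemma omegaN_zpow_congr {N : ℕ} (hN : N ≠ 0) {a b : ℤ} (h : (N : ℤ) ∣ a - b) :
    omegaN N ^ a = omegaN N ^ b := by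
  have h1 : omegaN N ^ a = omegaN N ^ b * omegaN N ^ (a - b) := by
    rw [← zpow_add₀ omegaN_ne_zero]; congr 1; ring
  rw [h1, omegaN_zpow_eq_one hN h, mul_one]

lemma conj_omegaN_zpow {N : ℕ} (m : ℤ) :
    (starRingEnd ℂ) (omegaN N ^ m) = omegaN N ^ (-m) := by
  have habs : ‖omegaN N‖ = 1 := by
    have : omegaN N = Complex.exp ((2 * Real.pi / N : ℝ) * Complex.I) := by
      rw [omegaN]; push_cast; ring_nf
    rw [this, Complex.norm_exp_ofReal_mul_I]
  rw [map_zpow₀, ← Complex.inv_eq_conj habs, inv_zpow, ← zpow_neg]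

lemma sum_omegaN_zpow {N : ℕ} (hN : N ≠ 0) {m : ℤ} (hm : ¬ (N : ℤ) ∣ m) :
    ∑ p ∈ Finset.range N, omegaN N ^ ((p : ℤ) * m) = 0 := by
  have h1 : omegaN N ^ m ≠ 1 := fun h => hm (((omegaN_prim hN).zpow_eq_one_iff_dvd m).1 h)
  have h2 : ∀ p : ℕ, omegaN N ^ ((p : ℤ) * m) = (omegaN N ^ m) ^ p := fun p => by
    rw [← zpow_natCast (omegaN N ^ m), ← zpow_mul]; congr 1; ring
  simp_rw [h2]
  rw [geom_sum_eq h1]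
  have h3 : (omegaN N ^ m) ^ N = 1 := by
    rw [← zpow_natCast (omegaN N ^ m), ← zpow_mul,
      omegaN_zpow_eq_one hN ⟨m, mul_comm m (N : ℤ)⟩]
  rw [h3]; simp

lemma sum_shift_omegaN {N : ℕ} (hN : N ≠ 0) {m : ℤ} (hm : ¬ (N : ℤ) ∣ m) :
    ∑ p : Fin N, omegaN N ^ ((((p : ℕ) : ℤ) + 1) * m) = 0 := by
  rw [Fin.sum_univ_eq_sum_range (fun p : ℕ => omegaN N ^ (((p : ℤ) + 1) * m))]
  have h2 : ∀ p : ℕ, omegaN N ^ (((p : ℤ) + 1) * m) = omegaN N ^ m * omegaN N ^ ((p : ℤ) * m) :=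
    fun p => by rw [← zpow_add₀ omegaN_ne_zero]; congr 1; ring
  simp_rw [h2]
  rw [← Finset.mul_sum, sum_omegaN_zpow hN hm, mul_zero]

/-- exponent of `ω` in coordinate `p` of `ξ_{ij}`. -/
def Ee (N : ℕ) (i j : ℤ) (p : Fin N) : ℤ :=
  if (p : ℕ) = 0 then 1 - j else if (p : ℕ) = N - 1 then i - 1
  else (((p : ℕ) : ℤ) + 1) * (i - j)

lemma xiVec_eq (N : ℕ) (i j : ℤ) (p : Fin N) :
    xiVec N i j p = omegaN N ^ (Ee N i j p) / (Real.sqrt N : ℂ) := by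
  unfold xiVec Ee
  rw [PiLp.toLp_apply]
  split_ifs <;> rfl

lemma term_eq {N : ℕ} (hN : N ≠ 0) (i j k l : ℤ) (p : Fin N) :
    (starRingEnd ℂ) (xiVec N i j p) * xiVec N k l p
      = omegaN N ^ (Ee N k l p - Ee N i j p) / N := by
  rw [xiVec_eq, xiVec_eq, map_div₀, conj_omegaN_zpow, Complex.conj_ofReal,
    div_mul_div_comm, ← zpow_add₀ omegaN_ne_zero]
  have hs : ((Real.sqrt N : ℝ) : ℂ) * ((Real.sqrt N : ℝ) : ℂ) = (N : ℂ) := by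
    rw [← Complex.ofReal_mul, Real.mul_self_sqrt (Nat.cast_nonneg N)]; norm_cast
  rw [hs]
  congr 1; ring

lemma inner_xiVec {N : ℕ} (hN : N ≠ 0) (i j k l : ℤ) :
    (inner ℂ (xiVec N i j) (xiVec N k l) : ℂ)
      = ∑ p : Fin N, omegaN N ^ (Ee N k l p - Ee N i j p) / N := by
  rw [PiLp.inner_apply]
  exact Finset.sum_congr rfl fun p _ => by rw [RCLike.inner_apply, mul_comm, term_eq hN]

lemma inner_xiVec_self {N : ℕ} (hN : N ≠ 0) (i j : ℤ) :
    (inner ℂ (xiVec N i j) (xiVec N i j) : ℂ) = 1 := by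
  rw [inner_xiVec hN]
  have : ∀ p : Fin N, omegaN N ^ (Ee N i j p - Ee N i j p) / N = 1 / (N : ℂ) := fun p => by
    rw [sub_self, zpow_zero]
  simp_rw [this]
  rw [Finset.sum_const, Finset.card_univ, Fintype.card_fin, nsmul_eq_mul]
  field_simp

lemma not_dvd_sub {N : ℕ} (hN : 5 ≤ N) {j l : ℤ} (hj : 1 ≤ j) (hj2 : j ≤ N)
    (hl : 1 ≤ l) (hl2 : l ≤ N) (hjl : j ≠ l) : ¬ (N : ℤ) ∣ (j - l) := by
  intro h
  have := Int.eq_zero_of_abs_lt_dvd h (abs_lt.2 ⟨by omega, by omega⟩)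
  omega

lemma inner_xiVec_row {N : ℕ} (hN : 5 ≤ N) (i j l : ℤ) (hj : 1 ≤ j) (hj2 : j ≤ N)
    (hl : 1 ≤ l) (hl2 : l ≤ N) (hjl : j ≠ l) :
    (inner ℂ (xiVec N i j) (xiVec N i l) : ℂ) = 0 := by
  have hN0 : N ≠ 0 := by omega
  have hm : ¬ (N : ℤ) ∣ (j - l) := not_dvd_sub hN hj hj2 hl hl2 hjl
  rw [inner_xiVec hN0]
  have key : ∀ p : Fin N, omegaN N ^ (Ee N i l p - Ee N i j p)
      = omegaN N ^ ((((p : ℕ) : ℤ) + 1) * (j - l)) := by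
    intro p
    apply omegaN_zpow_congr hN0
    unfold Ee
    split_ifs with h1 h2
    · have hc : (((p : ℕ) : ℤ)) = 0 := by omega
      rw [hc]
      have : (1 - l) - (1 - j) - (0 + 1) * (j - l) = 0 := by ring
      rw [this]
      exact dvd_zero _
    · have hc : (((p : ℕ) : ℤ)) = (N : ℤ) - 1 := by omega
      rw [hc]
      exact ⟨-(j - l), by ring⟩
    · have : (((p : ℕ) : ℤ) + 1) * (i - l) - (((p : ℕ) : ℤ) + 1) * (i - j)
          - (((p : ℕ) : ℤ) + 1) * (j - l) = 0 := by ring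
      rw [this]
      exact dvd_zero _
  simp_rw [key]
  rw [← Finset.sum_div, sum_shift_omegaN hN0 hm, zero_div]

lemma inner_xiVec_col {N : ℕ} (hN : 5 ≤ N) (i j k : ℤ) (hi : 1 ≤ i) (hi2 : i ≤ N)
    (hk : 1 ≤ k) (hk2 : k ≤ N) (hik : i ≠ k) :
    (inner ℂ (xiVec N i j) (xiVec N k j) : ℂ) = 0 := by
  have hN0 : N ≠ 0 := by omega
  haveI : NeZero N := ⟨hN0⟩
  have hm : ¬ (N : ℤ) ∣ (k - i) := not_dvd_sub hN hk hk2 hi hi2 (Ne.symm hik)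
  rw [inner_xiVec hN0]
  set f : Fin N → ℂ := fun p => omegaN N ^ (Ee N k j p - Ee N i j p) / N with hf
  set g : Fin N → ℂ := fun p => omegaN N ^ ((((p : ℕ) : ℤ) + 1) * (k - i)) / N with hg
  have hmid : ∀ p : Fin N, (p : ℕ) ≠ 0 → (p : ℕ) ≠ N - 1 → f p = g p := by
    intro p h1 h2
    simp only [hf, hg, Ee, if_neg h1, if_neg h2]
    have : (((p : ℕ) : ℤ) + 1) * (k - j) - (((p : ℕ) : ℤ) + 1) * (i - j)
        = (((p : ℕ) : ℤ) + 1) * (k - i) := by ring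
    rw [this]
  set pl : Fin N := ⟨N - 1, by omega⟩ with hpl
  have h0l : (0 : Fin N) ≠ pl := by
    intro h
    have := congrArg Fin.val h
    simp [hpl] at this
    omega
  have split : ∑ p : Fin N, f p = ∑ p : Fin N, g p + ∑ p : Fin N, (f p - g p) := by
    rw [← Finset.sum_add_distrib]; simp
  have hsum_g : ∑ p : Fin N, g p = 0 := by
    simp only [hg]
    rw [← Finset.sum_div, sum_shift_omegaN hN0 hm, zero_div]
  have hsupp : ∑ p : Fin N, (f p - g p) = ∑ p ∈ ({0, pl} : Finset (Fin N)), (f p - g p) := by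
    symm
    apply Finset.sum_subset (Finset.subset_univ _)
    intro x _ hx
    simp only [Finset.mem_insert, Finset.mem_singleton] at hx
    push_neg at hx
    rw [hmid x ?_ ?_, sub_self]
    · intro h; exact hx.1 (by ext; simp [h])
    · intro h; exact hx.2 (by ext; simp [hpl, h])
  have e0 : f 0 - g 0 = (1 - omegaN N ^ (k - i)) / N := by
    have hv : ((0 : Fin N) : ℕ) = 0 := rfl
    simp only [hf, hg, Ee, hv, if_pos rfl, if_true]
    have h1 : (1 - j) - (1 - j) = (0 : ℤ) := by ring
    have h2 : (((0 : ℕ) : ℤ) + 1) * (k - i) = k - i := by ring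
    rw [h1, h2, zpow_zero, div_sub_div_same]
  have el : f pl - g pl = (omegaN N ^ (k - i) - 1) / N := by
    have hv : ((pl : Fin N) : ℕ) = N - 1 := rfl
    have hv0 : ((pl : Fin N) : ℕ) ≠ 0 := by rw [hv]; omega
    simp only [hf, hg, Ee, hv, if_neg hv0, if_neg (show N - 1 ≠ 0 by omega), if_pos rfl, if_true]
    have h1 : (k - 1) - (i - 1) = k - i := by ring
    have h2 : (((N - 1 : ℕ) : ℤ) + 1) * (k - i) = (N : ℤ) * (k - i) := by
      have : ((N - 1 : ℕ) : ℤ) = (N : ℤ) - 1 := by omega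
      rw [this]; ring
    rw [h1, h2, omegaN_zpow_eq_one hN0 ⟨k - i, rfl⟩, div_sub_div_same]
  rw [split, hsum_g, hsupp, Finset.sum_pair h0l, e0, el]
  ring

theorem xiVec_magic_basis (N : ℕ) (hN : 5 ≤ N) :
    (∀ i j k l : ℤ, 1 ≤ i → i ≤ N → 1 ≤ j → j ≤ N → 1 ≤ k → k ≤ N → 1 ≤ l → l ≤ N →
      ((i = k ∧ j ≠ l) ∨ (i ≠ k ∧ j = l)) →
      (inner ℂ (xiVec N i j) (xiVec N k l) : ℂ) = 0)
    ∧ (∀ i : ℤ, 1 ≤ i → i ≤ N →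
        Orthonormal ℂ (fun p : Fin N => xiVec N i (((p : ℕ) : ℤ) + 1)) ∧
        Submodule.span ℂ (Set.range fun p : Fin N => xiVec N i (((p : ℕ) : ℤ) + 1)) = ⊤)
    ∧ (∀ j : ℤ, 1 ≤ j → j ≤ N →
        Orthonormal ℂ (fun p : Fin N => xiVec N (((p : ℕ) : ℤ) + 1) j) ∧
        Submodule.span ℂ (Set.range fun p : Fin N => xiVec N (((p : ℕ) : ℤ) + 1) j) = ⊤) := by
  have hN0 : N ≠ 0 := by omega
  haveI : Nonempty (Fin N) := ⟨⟨0, by omega⟩⟩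
  have hcard : Fintype.card (Fin N) = Module.finrank ℂ (EuclideanSpace ℂ (Fin N)) := by
    simp [finrank_euclideanSpace]
  refine ⟨?_, ?_, ?_⟩
  · rintro i j k l hi hi2 hj hj2 hk hk2 hl hl2 (⟨rfl, hjl⟩ | ⟨hik, rfl⟩)
    · exact inner_xiVec_row hN i j l hj hj2 hl hl2 hjl
    · exact inner_xiVec_col hN i j k hi hi2 hk hk2 hik
  · intro i hi hi2
    have horth : Orthonormal ℂ (fun p : Fin N => xiVec N i (((p : ℕ) : ℤ) + 1)) := by
      rw [orthonormal_iff_ite]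
      intro p q
      by_cases hpq : p = q
      · subst hpq
        rw [if_pos rfl, inner_xiVec_self hN0]
      · rw [if_neg hpq]
        apply inner_xiVec_row hN i _ _ (by omega) (by have := p.isLt; omega)
          (by omega) (by have := q.isLt; omega)
        intro h
        exact hpq (Fin.ext (by omega))
    exact ⟨horth, horth.linearIndependent.span_eq_top_of_card_eq_finrank hcard⟩
  · intro j hj hj2
    have horth : Orthonormal ℂ (fun p : Fin N => xiVec N (((p : ℕ) : ℤ) + 1) j) := by
      rw [orthonormal_iff_ite]
      intro p q
      by_cases hpq : p = q
      · subst hpq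
        rw [if_pos rfl, inner_xiVec_self hN0]
      · rw [if_neg hpq]
        apply inner_xiVec_col hN _ j _ (by omega) (by have := p.isLt; omega)
          (by omega) (by have := q.isLt; omega)
        intro h
        exact hpq (Fin.ext (by omega))
    exact ⟨horth, horth.linearIndependent.span_eq_top_of_card_eq_finrank hcard⟩
end

section
/- Let P and Q be orthogonal projections on a Hilbert space H with PQ ≠ QP. Then there exists a unit vector x ∈ ran P such that x is orthogonal to ran P ∩ ran Q and to ran P ∩ ker Q, and for such x one has 0 < ⟨x, Qx⟩ < 1. -/
open scoped InnerProductSpace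

theorem exists_unit_vector_of_noncommuting_projections
    {H : Type*} [NormedAddCommGroup H] [InnerProductSpace ℂ H] [CompleteSpace H]
    (P Q : H →L[ℂ] H)
    (hP : P * P = P) (hPs : IsSelfAdjoint P)
    (hQ : Q * Q = Q) (hQs : IsSelfAdjoint Q)
    (hPQ : P * Q ≠ Q * P) :
    (∃ x : H, ‖x‖ = 1 ∧ P x = x ∧
        (∀ y : H, P y = y → Q y = y → ⟪x, y⟫_ℂ = 0) ∧
        (∀ y : H, P y = y → Q y = 0 → ⟪x, y⟫_ℂ = 0))
    ∧ (∀ x : H, ‖x‖ = 1 → P x = x →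
        (∀ y : H, P y = y → Q y = y → ⟪x, y⟫_ℂ = 0) →
        (∀ y : H, P y = y → Q y = 0 → ⟪x, y⟫_ℂ = 0) →
        0 < (⟪x, Q x⟫_ℂ).re ∧ (⟪x, Q x⟫_ℂ).re < 1 ∧ (⟪x, Q x⟫_ℂ).im = 0) := by
  have hQsym : ∀ u v : H, ⟪Q u, v⟫_ℂ = ⟪u, Q v⟫_ℂ := hQs.isSymmetric
  constructor
  · -- existence
    by_contra hno
    have hzero : ∀ x : H, P x = x → (∀ y : H, P y = y → Q y = y → ⟪x, y⟫_ℂ = 0) →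
        (∀ y : H, P y = y → Q y = 0 → ⟪x, y⟫_ℂ = 0) → x = 0 := by
      intro x hx h1 h2
      by_contra hx0
      refine hno ⟨(‖x‖ : ℂ)⁻¹ • x, ?_, ?_, ?_, ?_⟩
      · have : ‖x‖ ≠ 0 := norm_ne_zero_iff.mpr hx0
        simp [norm_smul, this]
      · rw [map_smul, hx]
      · intro y hy1 hy2
        rw [inner_smul_left, h1 y hy1 hy2, mul_zero]
      · intro y hy1 hy2
        rw [inner_smul_left, h2 y hy1 hy2, mul_zero]
    -- the two subspaces
    set A : Submodule ℂ H :=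
      { carrier := {y | P y = y ∧ Q y = y}
        add_mem' := by
          rintro a b ⟨ha1, ha2⟩ ⟨hb1, hb2⟩
          exact ⟨by rw [map_add, ha1, hb1], by rw [map_add, ha2, hb2]⟩
        zero_mem' := ⟨map_zero _, map_zero _⟩
        smul_mem' := by
          rintro c a ⟨h1, h2⟩
          exact ⟨by rw [map_smul, h1], by rw [map_smul, h2]⟩ } with hAdef
    set B : Submodule ℂ H :=
      { carrier := {y | P y = y ∧ Q y = 0}
        add_mem' := by
          rintro a b ⟨ha1, ha2⟩ ⟨hb1, hb2⟩
          exact ⟨by rw [map_add, ha1, hb1], by rw [map_add, ha2, hb2, add_zero]⟩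
        zero_mem' := ⟨map_zero _, map_zero _⟩
        smul_mem' := by
          rintro c a ⟨h1, h2⟩
          exact ⟨by rw [map_smul, h1], by rw [map_smul, h2, smul_zero]⟩ } with hBdef
    have hAc : IsClosed (A : Set H) :=
      (isClosed_eq P.continuous continuous_id).inter (isClosed_eq Q.continuous continuous_id)
    have hBc : IsClosed (B : Set H) :=
      (isClosed_eq P.continuous continuous_id).inter (isClosed_eq Q.continuous continuous_const)
    haveI : CompleteSpace A := hAc.completeSpace_coe
    haveI : CompleteSpace B := hBc.completeSpace_coe
    -- key: P (Q x) = Q x whenever P x = x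
    have claim : ∀ x : H, P x = x → P (Q x) = Q x := by
      intro x hx
      set a : H := (A.orthogonalProjectionOnto x : H) with ha
      set b : H := (B.orthogonalProjectionOnto x : H) with hb
      have haA : a ∈ A := SetLike.coe_mem _
      have hbB : b ∈ B := SetLike.coe_mem _
      have haP : P a = a := haA.1
      have haQ : Q a = a := haA.2
      have hbP : P b = b := hbB.1
      have hbQ : Q b = 0 := hbB.2
      have hxa : x - a ∈ Aᗮ := Submodule.sub_starProjection_mem_orthogonal x
      have hxb : x - b ∈ Bᗮ := Submodule.sub_starProjection_mem_orthogonal x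
      set r : H := x - a - b with hr
      have hrP : P r = r := by rw [hr, map_sub, map_sub, hx, haP, hbP]
      have hrA : ∀ y : H, P y = y → Q y = y → ⟪r, y⟫_ℂ = 0 := by
        intro y hy1 hy2
        have hyA : y ∈ A := ⟨hy1, hy2⟩
        have h1 : ⟪y, x - a⟫_ℂ = 0 := hxa y hyA
        have h2 : ⟪y, b⟫_ℂ = 0 := by
          rw [← hy2, hQsym, hbQ, inner_zero_right]
        have : ⟪y, r⟫_ℂ = 0 := by
          have : r = (x - a) - b := by rw [hr]
          rw [this, inner_sub_right, h1, h2, sub_zero]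
        rw [← inner_conj_symm, this, map_zero]
      have hrB : ∀ y : H, P y = y → Q y = 0 → ⟪r, y⟫_ℂ = 0 := by
        intro y hy1 hy2
        have hyB : y ∈ B := ⟨hy1, hy2⟩
        have h1 : ⟪y, x - b⟫_ℂ = 0 := hxb y hyB
        have h2 : ⟪y, a⟫_ℂ = 0 := by
          rw [← haQ, ← hQsym, hy2, inner_zero_left]
        have : ⟪y, r⟫_ℂ = 0 := by
          have : r = (x - b) - a := by rw [hr]; abel
          rw [this, inner_sub_right, h1, h2, sub_zero]
        rw [← inner_conj_symm, this, map_zero]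
      have hr0 : r = 0 := hzero r hrP hrA hrB
      have hab : x = a + b := by
        have := hr0
        rw [hr] at this
        linear_combination (norm := abel) this
      rw [hab, map_add, haQ, hbQ, add_zero, haP]
    have key : P * (Q * P) = Q * P := by
      ext v
      have hPv : P (P v) = P v := by
        have := DFunLike.congr_fun hP v
        simpa using this
      simpa using claim (P v) hPv
    have key' : P * Q * P = Q * P := by rw [mul_assoc]; exact key
    have hstar := congrArg star key'
    rw [star_mul, star_mul, star_mul, hPs.star_eq, hQs.star_eq] at hstar
    -- hstar : P * (Q * P) = P * Q  (modulo assoc)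
    apply hPQ
    calc P * Q = P * Q * P := by
          have := hstar
          rw [← mul_assoc] at this
          exact this.symm
      _ = Q * P := key'
  · -- quantitative part
    intro x hx hxP hA hB
    have hQQx : Q (Q x) = Q x := by
      have := DFunLike.congr_fun hQ x
      simpa using this
    have h1 : ⟪x, Q x⟫_ℂ = (‖Q x‖ : ℂ) ^ 2 := by
      rw [← hQQx, ← hQsym, hQQx, inner_self_eq_norm_sq_to_K]
      norm_cast
    have hre : (⟪x, Q x⟫_ℂ).re = ‖Q x‖ ^ 2 := by
      rw [h1, ← Complex.ofReal_pow, Complex.ofReal_re]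
    have him : (⟪x, Q x⟫_ℂ).im = 0 := by
      rw [h1, ← Complex.ofReal_pow, Complex.ofReal_im]
    have hQx0 : Q x ≠ 0 := by
      intro h
      have := hB x hxP h
      rw [inner_self_eq_zero] at this
      rw [this, norm_zero] at hx
      norm_num at hx
    have hxQx : x ≠ Q x := by
      intro h
      have hQxx : Q x = x := h.symm
      have := hA x hxP hQxx
      rw [inner_self_eq_zero] at this
      rw [this, norm_zero] at hx
      norm_num at hx
    have hsub : ‖x - Q x‖ ^ 2 = 1 - ‖Q x‖ ^ 2 := by
      have hns := @norm_sub_sq ℂ H _ _ _ x (Q x)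
      rw [hx] at hns
      have hre' : RCLike.re ⟪x, Q x⟫_ℂ = ‖Q x‖ ^ 2 := hre
      rw [hre'] at hns
      rw [hns]; ring
    have h2 : 0 < ‖Q x‖ := norm_pos_iff.mpr hQx0
    have h3 : 0 < ‖x - Q x‖ := by
      rw [norm_pos_iff]
      exact sub_ne_zero_of_ne hxQx
    refine ⟨?_, ?_, him⟩
    · rw [hre]; positivity
    · rw [hre]; nlinarith
end

section
/- Let A be a unital C*-algebra with a magic unitary u = (u_{ij}) ∈ M_N(A) and let h be a faithful tracial state on A. Suppose h(u_{ij}) = 1/N for all i,j, h(u_{ij}u_{kl}) = 1/(N(N−1)) whenever i ≠ k and j ≠ l, and h is invariant under relabeling: h(u_{i_1 j_1}⋯u_{i_n j_n}) = h(u_{σ(i_1)τ(j_1)}⋯u_{σ(i_n)τ(j_n)}) for all permutations σ, τ of {1,…,N}. Then for indices with |{i_1,i_2,i_3}| = |{j_1,j_2,j_3}| = 3, one has h(u_{i_1 j_1} u_{i_2 j_2} u_{i_3 j_3}) = 1/(N(N−1)(N−2)). -/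
lemma haar_prod3 {A : Type*} [Ring A] (v : Fin 3 → A) :
    (List.ofFn v).prod = v 0 * v 1 * v 2 := by
  simp [List.ofFn_succ, mul_assoc]

theorem haar_degree_three
    {A : Type*} [NormedRing A] [StarRing A] [CStarRing A] [NormedAlgebra ℂ A]
    (N : ℕ) (hN : 3 ≤ N)
    (u : Fin N → Fin N → A)
    -- magic unitary: entries are projections, rows and columns sum to 1
    (hu_proj : ∀ i j, u i j * u i j = u i j ∧ star (u i j) = u i j)
    (hu_row : ∀ i, ∑ j, u i j = 1)
    (hu_col : ∀ j, ∑ i, u i j = 1)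
    -- h is a faithful tracial state
    (h : A →ₗ[ℂ] ℂ)
    (h_one : h 1 = 1)
    (h_pos : ∀ a, ∃ r : ℝ, 0 ≤ r ∧ h (star a * a) = r)
    (h_tracial : ∀ a b, h (a * b) = h (b * a))
    (h_faithful : ∀ a, h (star a * a) = 0 → a = 0)
    -- invariance under relabeling by pairs of permutations
    (h_relabel : ∀ (n : ℕ) (is js : Fin n → Fin N) (σ τ : Equiv.Perm (Fin N)),
      h ((List.ofFn fun m => u (is m) (js m)).prod) =
        h ((List.ofFn fun m => u (σ (is m)) (τ (js m))).prod))
    -- degree one and two moments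
    (h_deg1 : ∀ i j, h (u i j) = 1 / (N : ℂ))
    (h_deg2 : ∀ i j k l, i ≠ k → j ≠ l →
      h (u i j * u k l) = 1 / ((N : ℂ) * ((N : ℂ) - 1))) :
    ∀ i₁ i₂ i₃ j₁ j₂ j₃ : Fin N,
      i₁ ≠ i₂ → i₁ ≠ i₃ → i₂ ≠ i₃ → j₁ ≠ j₂ → j₁ ≠ j₃ → j₂ ≠ j₃ →
      h (u i₁ j₁ * u i₂ j₂ * u i₃ j₃) =
        1 / ((N : ℂ) * ((N : ℂ) - 1) * ((N : ℂ) - 2)) := by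
  -- column orthogonality: entries in the same column, different rows, multiply to 0
  have horth : ∀ (j i i' : Fin N), i ≠ i' → u i j * u i' j = 0 := by
    intro j i i' hne
    set p := u i' j with hp
    -- star (u i j * p) * (u i j * p) = p * u i j * p
    have hstar : ∀ k : Fin N, star (u k j * p) * (u k j * p) = p * u k j * p := by
      intro k
      rw [star_mul, (hu_proj i' j).2, (hu_proj k j).2]
      rw [mul_assoc, ← mul_assoc (u k j), (hu_proj k j).1, ← mul_assoc]
    -- sum over all k of h (p * u k j * p) = h p
    have hsum : ∑ k, h (p * u k j * p) = h p := by
      have : ∑ k, p * u k j * p = p := by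
        rw [← Finset.sum_mul, ← Finset.mul_sum, hu_col j, mul_one, (hu_proj i' j).1]
      rw [← map_sum, this]
    -- the term at k = i' equals h p
    have hterm : h (p * u i' j * p) = h p := by
      rw [(hu_proj i' j).1, (hu_proj i' j).1]
    -- so the sum over k ≠ i' is 0
    have hsum0 : ∑ k ∈ Finset.univ.erase i', h (p * u k j * p) = 0 := by
      have := Finset.add_sum_erase Finset.univ (fun k => h (p * u k j * p))
        (Finset.mem_univ i')
      rw [hsum] at this
      rw [hterm] at this
      linear_combination this
    -- each term is nonnegative real; conclude each is zero
    have hre : ∀ k ∈ Finset.univ.erase i', (0:ℝ) ≤ (h (p * u k j * p)).re ∧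
        (h (p * u k j * p)).im = 0 := by
      intro k _
      obtain ⟨r, hr0, hr⟩ := h_pos (u k j * p)
      rw [hstar k] at hr
      rw [hr]
      simp [hr0]
    have hre0 : (h (p * u i j * p)).re = 0 := by
      have hzero : ∑ k ∈ Finset.univ.erase i', (h (p * u k j * p)).re = 0 := by
        have := congrArg Complex.re hsum0
        simpa [Complex.re_sum] using this
      have := (Finset.sum_eq_zero_iff_of_nonneg (fun k hk => (hre k hk).1)).mp hzero
      exact this i (Finset.mem_erase.mpr ⟨hne, Finset.mem_univ i⟩)
    have him0 : (h (p * u i j * p)).im = 0 :=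
      (hre i (Finset.mem_erase.mpr ⟨hne, Finset.mem_univ i⟩)).2
    have hz : h (p * u i j * p) = 0 := Complex.ext hre0 him0
    have := h_faithful (u i j * p) (by rw [hstar i]; exact hz)
    exact this
  intro i₁ i₂ i₃ j₁ j₂ j₃ hi12 hi13 hi23 hj12 hj13 hj23
  -- relabeling: for any j ∉ {j₁, j₂}, the moment equals the target moment
  have hrel : ∀ j : Fin N, j ≠ j₁ → j ≠ j₂ →
      h (u i₁ j₁ * u i₂ j₂ * u i₃ j) = h (u i₁ j₁ * u i₂ j₂ * u i₃ j₃) := by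
    intro j hj1 hj2
    have key := h_relabel 3 ![i₁, i₂, i₃] ![j₁, j₂, j] 1 (Equiv.swap j j₃)
    rw [haar_prod3, haar_prod3] at key
    simpa [Equiv.swap_apply_left, Equiv.swap_apply_of_ne_of_ne hj1.symm hj13,
      Equiv.swap_apply_of_ne_of_ne hj2.symm hj23] using key
  -- sum over j of the degree-3 moments
  have hsum3 : ∑ j, h (u i₁ j₁ * u i₂ j₂ * u i₃ j) = 1 / ((N:ℂ) * ((N:ℂ) - 1)) := by
    have : ∑ j, u i₁ j₁ * u i₂ j₂ * u i₃ j = u i₁ j₁ * u i₂ j₂ := by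
      rw [← Finset.mul_sum, hu_row i₃, mul_one]
    rw [← map_sum, this, h_deg2 i₁ j₁ i₂ j₂ hi12 hj12]
  -- the terms at j = j₁ and j = j₂ vanish
  have hz1 : h (u i₁ j₁ * u i₂ j₂ * u i₃ j₁) = 0 := by
    rw [h_tracial (u i₁ j₁ * u i₂ j₂) (u i₃ j₁), ← mul_assoc,
      horth j₁ i₃ i₁ (Ne.symm hi13), zero_mul, map_zero]
  have hz2 : h (u i₁ j₁ * u i₂ j₂ * u i₃ j₂) = 0 := by
    rw [mul_assoc, horth j₂ i₂ i₃ hi23, mul_zero, map_zero]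
  -- split off j₁ and j₂ from the sum
  set s : Finset (Fin N) := Finset.univ \ {j₁, j₂} with hs
  have hsplit : ∑ j ∈ s, h (u i₁ j₁ * u i₂ j₂ * u i₃ j) = 1 / ((N:ℂ) * ((N:ℂ) - 1)) := by
    rw [← hsum3]
    rw [show (Finset.univ : Finset (Fin N)) = s ∪ {j₁, j₂} by
      rw [hs, Finset.sdiff_union_of_subset (Finset.subset_univ _)]]
    rw [Finset.sum_union (by rw [hs]; exact Finset.sdiff_disjoint)]
    rw [Finset.sum_pair hj12, hz1, hz2]
    ring
  have hcard : s.card = N - 2 := by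
    rw [hs, Finset.card_sdiff_of_subset (Finset.subset_univ _), Finset.card_univ, Fintype.card_fin,
      Finset.card_pair hj12]
  have hconst : ∀ j ∈ s, h (u i₁ j₁ * u i₂ j₂ * u i₃ j) = h (u i₁ j₁ * u i₂ j₂ * u i₃ j₃) := by
    intro j hj
    rw [hs, Finset.mem_sdiff, Finset.mem_insert, Finset.mem_singleton] at hj
    push_neg at hj
    exact hrel j hj.2.1 hj.2.2
  rw [Finset.sum_congr rfl hconst, Finset.sum_const, hcard] at hsplit
  have hNc : ((N - 2 : ℕ) : ℂ) = (N : ℂ) - 2 := by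
    have : 2 ≤ N := by omega
    push_cast [this]
    ring
  rw [nsmul_eq_mul, hNc] at hsplit
  have hN0 : (N : ℂ) ≠ 0 := by
    simpa using Nat.cast_ne_zero (R := ℂ).mpr (by omega : N ≠ 0)
  have hN1 : (N : ℂ) - 1 ≠ 0 := by
    intro hc
    have : (N : ℂ) = 1 := by linear_combination hc
    have : N = 1 := by exact_mod_cast this
    omega
  have hN2 : (N : ℂ) - 2 ≠ 0 := by
    intro hc
    have : (N : ℂ) = 2 := by linear_combination hc
    have : N = 2 := by exact_mod_cast this
    omega
  field_simp at hsplit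
  rw [eq_div_iff (mul_ne_zero (mul_ne_zero hN0 hN1) hN2)]
  linear_combination hsplit
end

section
/- Let A be a unital C*-algebra with a magic unitary u ∈ M_N(A), N ≥ 4, and a faithful tracial state h that is invariant under relabeling by pairs of permutations of the row and column indices and satisfies h(u_{ij}) = 1/N, h(u_{ij}u_{kl}) = 1/(N(N−1)) for i≠k, j≠l, and h(u_{i_1j_1}u_{i_2j_2}u_{i_3j_3}) = 1/(N(N−1)(N−2)) for distinct rows and distinct columns. Setting α₂ = h(u_{11}u_{22}u_{11}u_{23}) and α₄ = h(u_{11}u_{22}u_{13}u_{24}), one has α₂ + (N−3)α₄ = 0. -/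
set_option maxHeartbeats 1000000

theorem haar_degree_four_relation
    {A : Type*} [NormedRing A] [StarRing A] [CStarRing A] [NormedAlgebra ℂ A]
    (N : ℕ) (hN : 4 ≤ N)
    (u : Fin N → Fin N → A)
    -- magic unitary: entries are projections, rows and columns sum to 1
    (hu_proj : ∀ i j, u i j * u i j = u i j ∧ star (u i j) = u i j)
    (hu_row : ∀ i, ∑ j, u i j = 1)
    (hu_col : ∀ j, ∑ i, u i j = 1)
    -- h is a faithful tracial state
    (h : A →ₗ[ℂ] ℂ)
    (h_one : h 1 = 1)
    (h_pos : ∀ a, ∃ r : ℝ, 0 ≤ r ∧ h (star a * a) = r)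
    (h_tracial : ∀ a b, h (a * b) = h (b * a))
    (h_faithful : ∀ a, h (star a * a) = 0 → a = 0)
    -- invariance under relabeling by pairs of permutations
    (h_relabel : ∀ (n : ℕ) (is js : Fin n → Fin N) (σ τ : Equiv.Perm (Fin N)),
      h ((List.ofFn fun m => u (is m) (js m)).prod) =
        h ((List.ofFn fun m => u (σ (is m)) (τ (js m))).prod))
    -- degree ≤ 3 moments
    (h_deg1 : ∀ i j, h (u i j) = 1 / (N : ℂ))
    (h_deg2 : ∀ i j k l, i ≠ k → j ≠ l →
      h (u i j * u k l) = 1 / ((N : ℂ) * ((N : ℂ) - 1)))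
    (h_deg3 : ∀ i₁ i₂ i₃ j₁ j₂ j₃ : Fin N,
      i₁ ≠ i₂ → i₁ ≠ i₃ → i₂ ≠ i₃ → j₁ ≠ j₂ → j₁ ≠ j₃ → j₂ ≠ j₃ →
      h (u i₁ j₁ * u i₂ j₂ * u i₃ j₃) =
        1 / ((N : ℂ) * ((N : ℂ) - 1) * ((N : ℂ) - 2))) :
    -- α₂ + (N - 3) α₄ = 0, where α₂ = h(u₁₁u₂₂u₁₁u₂₃) and α₄ = h(u₁₁u₂₂u₁₃u₂₄)
    h (u ⟨0, by omega⟩ ⟨0, by omega⟩ * u ⟨1, by omega⟩ ⟨1, by omega⟩ *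
        u ⟨0, by omega⟩ ⟨0, by omega⟩ * u ⟨1, by omega⟩ ⟨2, by omega⟩)
      + ((N : ℂ) - 3) *
        h (u ⟨0, by omega⟩ ⟨0, by omega⟩ * u ⟨1, by omega⟩ ⟨1, by omega⟩ *
            u ⟨0, by omega⟩ ⟨2, by omega⟩ * u ⟨1, by omega⟩ ⟨3, by omega⟩) = 0 := by
  classical
  -- generic orthogonality lemma for a family of projections summing to 1
  have orth : ∀ (v : Fin N → A), (∀ l, v l * v l = v l ∧ star (v l) = v l) →
      (∑ l, v l) = 1 → ∀ j l, j ≠ l → v j * v l = 0 := by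
    intro v hv hsum
    have key : ∀ j l, l ≠ j → v l * v j = 0 := by
      intro j l hlj
      -- sum of h(v j * v l' * v j) over l' ≠ j is zero
      have hsum2 : ∑ l' ∈ Finset.univ.erase j, h (v j * v l' * v j) = 0 := by
        have h1 : ∑ l' : Fin N, (v j * v l' * v j) = v j := by
          rw [← Finset.sum_mul, ← Finset.mul_sum, hsum, mul_one, (hv j).1]
        have h2 : ∑ l' : Fin N, h (v j * v l' * v j) = h (v j) := by
          rw [← map_sum, h1]
        have h3 : h (v j * v j * v j) = h (v j) := by
          rw [(hv j).1, (hv j).1]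
        have h4 : h (v j * v j * v j) + ∑ l' ∈ Finset.univ.erase j, h (v j * v l' * v j)
            = ∑ l' : Fin N, h (v j * v l' * v j) :=
          Finset.add_sum_erase Finset.univ (fun l' => h (v j * v l' * v j))
            (Finset.mem_univ j)
        rw [h2, h3] at h4
        linear_combination h4
      -- each summand is h(star a * a) for a = v l' * v j
      choose r hr0 hr using fun l' => h_pos (v l' * v j)
      have hstar : ∀ l', star (v l' * v j) * (v l' * v j) = v j * v l' * v j := by
        intro l'
        rw [star_mul, (hv j).2, (hv l').2]
        calc v j * v l' * (v l' * v j) = v j * (v l' * v l') * v j := by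
              noncomm_ring
        _ = v j * v l' * v j := by rw [(hv l').1]
      have hsum3 : ∑ l' ∈ Finset.univ.erase j, ((r l' : ℂ)) = 0 := by
        rw [← hsum2]
        refine Finset.sum_congr rfl fun l' _ => ?_
        rw [← hstar l', hr l']
      have hsum4 : ∑ l' ∈ Finset.univ.erase j, r l' = 0 := by
        have := hsum3
        rw [← Complex.ofReal_sum] at this
        exact_mod_cast this
      have hzero : r l = 0 :=
        (Finset.sum_eq_zero_iff_of_nonneg (fun l' _ => hr0 l')).1 hsum4 l
          (Finset.mem_erase.2 ⟨hlj, Finset.mem_univ l⟩)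
      have : h (star (v l * v j) * (v l * v j)) = 0 := by
        rw [hr l, hzero, Complex.ofReal_zero]
      exact h_faithful _ this
    intro j l hjl
    exact key l j hjl
  -- row and column orthogonality
  have row_orth : ∀ i j l, j ≠ l → u i j * u i l = 0 := by
    intro i
    exact orth (u i) (fun l => hu_proj i l) (hu_row i)
  have col_orth : ∀ j i k, i ≠ k → u i j * u k j = 0 := by
    intro j
    exact orth (fun i => u i j) (fun i => hu_proj i j) (hu_col j)
  -- relabeling for degree-4 products
  have rel4 : ∀ (i1 i2 i3 i4 j1 j2 j3 j4 : Fin N) (σ τ : Equiv.Perm (Fin N)),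
      h (u i1 j1 * u i2 j2 * u i3 j3 * u i4 j4) =
      h (u (σ i1) (τ j1) * u (σ i2) (τ j2) * u (σ i3) (τ j3) * u (σ i4) (τ j4)) := by
    intro i1 i2 i3 i4 j1 j2 j3 j4 σ τ
    have := h_relabel 4 ![i1,i2,i3,i4] ![j1,j2,j3,j4] σ τ
    simpa [List.ofFn_succ, mul_assoc] using this
  set e0 : Fin N := ⟨0, by omega⟩ with he0
  set e1 : Fin N := ⟨1, by omega⟩ with he1
  set e2 : Fin N := ⟨2, by omega⟩ with he2
  set e3 : Fin N := ⟨3, by omega⟩ with he3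
  have h01 : e0 ≠ e1 := by simp [he0, he1, Fin.ext_iff]
  have h02 : e0 ≠ e2 := by simp [he0, he2, Fin.ext_iff]
  have h03 : e0 ≠ e3 := by simp [he0, he3, Fin.ext_iff]
  have h12 : e1 ≠ e2 := by simp [he1, he2, Fin.ext_iff]
  have h13 : e1 ≠ e3 := by simp [he1, he3, Fin.ext_iff]
  have h23 : e2 ≠ e3 := by simp [he2, he3, Fin.ext_iff]
  set α₂ : ℂ := h (u e0 e0 * u e1 e1 * u e0 e0 * u e1 e2) with hα₂
  set α₄ : ℂ := h (u e0 e0 * u e1 e1 * u e0 e2 * u e1 e3) with hα₄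
  set f : Fin N → ℂ := fun j => h (u e0 e0 * u e1 e1 * u e0 j * u e1 e3) with hf
  -- total sum is zero
  have hsumf : ∑ j, f j = 0 := by
    rw [hf, ← map_sum]
    have : ∑ j : Fin N, (u e0 e0 * u e1 e1 * u e0 j * u e1 e3) = 0 := by
      rw [← Finset.sum_mul]
      rw [← Finset.mul_sum, hu_row e0, mul_one]
      rw [mul_assoc, row_orth e1 e1 e3 h13, mul_zero]
    rw [this, map_zero]
  -- values of f
  have hf0 : f e0 = α₂ := by
    rw [hf, hα₂]
    have := rel4 e0 e1 e0 e1 e0 e1 e0 e3 1 (Equiv.swap e2 e3)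
    simpa [Equiv.swap_apply_of_ne_of_ne, h02, h03, h12, h13,
      Equiv.swap_apply_right] using this
  have hf1 : f e1 = 0 := by
    show h (u e0 e0 * u e1 e1 * u e0 e1 * u e1 e3) = 0
    have : u e1 e1 * u e0 e1 = 0 := col_orth e1 e1 e0 h01.symm
    rw [mul_assoc (u e0 e0), this, mul_zero, zero_mul, map_zero]
  have hf3 : f e3 = 0 := by
    show h (u e0 e0 * u e1 e1 * u e0 e3 * u e1 e3) = 0
    have : u e0 e3 * u e1 e3 = 0 := col_orth e3 e0 e1 h01
    rw [mul_assoc, this, mul_zero, map_zero]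
  have hfj : ∀ j : Fin N, j ≠ e0 → j ≠ e1 → j ≠ e3 → f j = α₄ := by
    intro j hj0 hj1 hj3
    rw [hf, hα₄]
    have := rel4 e0 e1 e0 e1 e0 e1 j e3 1 (Equiv.swap j e2)
    simpa [Equiv.swap_apply_of_ne_of_ne, hj0.symm, hj1.symm, hj3.symm,
      h02, h12, h23.symm, Equiv.swap_apply_left] using this
  -- split the sum
  set s : Finset (Fin N) := {e0, e1, e3} with hs
  have hcard : s.card = 3 := by
    rw [hs]
    rw [Finset.card_insert_of_notMem (by simp [h01, h03]),
      Finset.card_insert_of_notMem (by simp [h13]), Finset.card_singleton]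
  have hsums : ∑ j ∈ s, f j = α₂ := by
    rw [hs, Finset.sum_insert (by simp [h01, h03]),
      Finset.sum_insert (by simp [h13]), Finset.sum_singleton, hf0, hf1, hf3]
    ring
  have hsumsc : ∑ j ∈ sᶜ, f j = ((N : ℂ) - 3) * α₄ := by
    have hval : ∀ j ∈ sᶜ, f j = α₄ := by
      intro j hj
      simp only [hs, Finset.mem_compl, Finset.mem_insert, Finset.mem_singleton,
        not_or] at hj
      exact hfj j hj.1 hj.2.1 hj.2.2
    rw [Finset.sum_congr rfl hval, Finset.sum_const, Finset.card_compl, hcard,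
      Fintype.card_fin, nsmul_eq_mul]
    congr 1
    have : (3 : ℕ) ≤ N := by omega
    push_cast [this]
    ring
  have htotal : ∑ j, f j = α₂ + ((N : ℂ) - 3) * α₄ := by
    rw [← Finset.sum_add_sum_compl s f, hsums, hsumsc]
  rw [htotal] at hsumf
  exact hsumf
end

section
/- Under the hypotheses of the previous statement, and assuming additionally that h(u_{11}u_{22}u_{11}u_{22}) > 0 and h(u_{11}u_{22}u_{11}u_{23}) > 0, one has −(N−4)!/N! < α₄ < 0, where α₄ = h(u_{11}u_{22}u_{13}u_{24}). Consequently 0 < h(u_{11}u_{22}u_{11}u_{22}) < (N−2)!/N! and ((N−3)/(N−2))·(N−3)!/N! < h(u_{11}u_{22}u_{11}u_{33}) < (N−3)!/N!. -/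
open Finset

set_option linter.unusedSectionVars false

section aux
variable {A : Type*} [NormedRing A] [StarRing A] [CStarRing A] [NormedAlgebra ℂ A]

theorem my_fact_ratio4 (N : ℕ) (hN : 5 ≤ N) :
    ((N-4).factorial : ℝ) / (N.factorial : ℝ)
      = 1/((N:ℝ)*((N:ℝ)-1)*((N:ℝ)-2)*((N:ℝ)-3)) := by
  obtain ⟨m, rfl⟩ : ∃ m, N = m + 4 := ⟨N - 4, by omega⟩
  have hnat : (m+4).factorial = (m+4)*((m+3)*((m+2)*((m+1)*m.factorial))) := by
    rw [show m+4 = (m+3)+1 by omega, Nat.factorial_succ, show m+3 = (m+2)+1 by omega,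
      Nat.factorial_succ, show m+2 = (m+1)+1 by omega, Nat.factorial_succ, Nat.factorial_succ]
  have hc : ((m+4:ℕ):ℝ) = (m:ℝ)+4 := by push_cast; ring
  have hfpos : (0:ℝ) < m.factorial := by exact_mod_cast m.factorial_pos
  rw [show m+4-4 = m by omega, hnat, hc,
    show ((m:ℝ)+4)-1 = (m:ℝ)+3 by ring, show ((m:ℝ)+4)-2 = (m:ℝ)+2 by ring,
    show ((m:ℝ)+4)-3 = (m:ℝ)+1 by ring]
  push_cast
  rw [div_eq_div_iff (by positivity) (by positivity)]
  ring

theorem my_fact_ratio3 (N : ℕ) (hN : 5 ≤ N) :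
    ((N-3).factorial : ℝ) / (N.factorial : ℝ) = 1/((N:ℝ)*((N:ℝ)-1)*((N:ℝ)-2)) := by
  obtain ⟨m, rfl⟩ : ∃ m, N = m + 4 := ⟨N - 4, by omega⟩
  have hnat : (m+4).factorial = (m+4)*((m+3)*((m+2)*(m+1).factorial)) := by
    rw [show m+4 = (m+3)+1 by omega, Nat.factorial_succ, show m+3 = (m+2)+1 by omega,
      Nat.factorial_succ, show m+2 = (m+1)+1 by omega, Nat.factorial_succ]
  have hc : ((m+4:ℕ):ℝ) = (m:ℝ)+4 := by push_cast; ring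
  have hfpos : (0:ℝ) < ((m+1).factorial : ℝ) := by exact_mod_cast (m+1).factorial_pos
  rw [show m+4-3 = m+1 by omega, hnat, hc,
    show ((m:ℝ)+4)-1 = (m:ℝ)+3 by ring, show ((m:ℝ)+4)-2 = (m:ℝ)+2 by ring]
  push_cast
  rw [div_eq_div_iff (by positivity) (by positivity)]
  ring

theorem my_fact_ratio2 (N : ℕ) (hN : 5 ≤ N) :
    ((N-2).factorial : ℝ) / (N.factorial : ℝ) = 1/((N:ℝ)*((N:ℝ)-1)) := by
  obtain ⟨m, rfl⟩ : ∃ m, N = m + 4 := ⟨N - 4, by omega⟩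
  have hnat : (m+4).factorial = (m+4)*((m+3)*(m+2).factorial) := by
    rw [show m+4 = (m+3)+1 by omega, Nat.factorial_succ, show m+3 = (m+2)+1 by omega,
      Nat.factorial_succ]
  have hc : ((m+4:ℕ):ℝ) = (m:ℝ)+4 := by push_cast; ring
  have hfpos : (0:ℝ) < ((m+2).factorial : ℝ) := by exact_mod_cast (m+2).factorial_pos
  rw [show m+4-2 = m+2 by omega, hnat, hc, show ((m:ℝ)+4)-1 = (m:ℝ)+3 by ring]
  push_cast
  rw [div_eq_div_iff (by positivity) (by positivity)]
  ring

theorem my_proj_orth {N : ℕ} (p : Fin N → A)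
    (hp : ∀ j, p j * p j = p j ∧ star (p j) = p j)
    (hsum : ∑ j, p j = 1)
    (h : A →ₗ[ℂ] ℂ)
    (h_pos : ∀ a, ∃ r : ℝ, 0 ≤ r ∧ h (star a * a) = r)
    (h_faithful : ∀ a, h (star a * a) = 0 → a = 0) :
    ∀ j l, j ≠ l → p j * p l = 0 := by
  intro j l hjl
  choose r hr hhr using fun k => h_pos (p k * p l)
  have hstar : ∀ k, star (p k * p l) * (p k * p l) = p l * p k * p l := by
    intro k
    rw [star_mul, (hp k).2, (hp l).2, mul_assoc (p l) (p k), ← mul_assoc (p k) (p k),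
      (hp k).1, ← mul_assoc]
  have key : ∑ k ∈ univ.erase l, (p l * p k * p l) = 0 := by
    have h1 : ∑ k, p l * p k * p l = p l := by
      rw [← Finset.sum_mul, ← Finset.mul_sum, hsum, mul_one, (hp l).1]
    have h2 : p l * p l * p l + ∑ k ∈ univ.erase l, p l * p k * p l = ∑ k, p l * p k * p l :=
      Finset.add_sum_erase _ (fun k => p l * p k * p l) (mem_univ l)
    rw [h1, (hp l).1, (hp l).1] at h2
    exact (add_eq_left).mp h2
  have hs : ∑ k ∈ univ.erase l, ((r k : ℂ)) = 0 := by
    have := congrArg h key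
    rw [map_sum, map_zero] at this
    rw [← this]
    refine Finset.sum_congr rfl fun k _ => ?_
    rw [← hhr k, hstar k]
  have hs' : ∑ k ∈ univ.erase l, r k = 0 := by
    have : ((∑ k ∈ univ.erase l, r k : ℝ) : ℂ) = 0 := by push_cast; exact hs
    exact_mod_cast this
  have hrj : r j = 0 := by
    have := (Finset.sum_eq_zero_iff_of_nonneg (fun k _ => hr k)).mp hs' j
      (Finset.mem_erase.mpr ⟨hjl, mem_univ j⟩)
    exact this
  exact h_faithful _ (by rw [hhr j, hrj]; norm_num)

theorem my_sum_split2 {N : ℕ} (f : Fin N → ℂ) (a b : Fin N) (hab : a ≠ b) (c : ℂ)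
    (hc : ∀ x, x ≠ a → x ≠ b → f x = c) :
    ∑ x, f x = f a + f b + ((N - 2 : ℕ) : ℂ) * c := by
  have hb : b ∈ univ.erase a := Finset.mem_erase.mpr ⟨hab.symm, mem_univ b⟩
  rw [← Finset.add_sum_erase _ f (mem_univ a), ← Finset.add_sum_erase _ f hb]
  have hrest : ∑ x ∈ (univ.erase a).erase b, f x = ((N - 2 : ℕ) : ℂ) * c := by
    have hconst : ∀ x ∈ (univ.erase a).erase b, f x = c := by
      intro x hx
      obtain ⟨hxb, hx'⟩ := Finset.mem_erase.mp hx
      exact hc x (Finset.mem_erase.mp hx').1 hxb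
    rw [Finset.sum_congr rfl hconst, Finset.sum_const, nsmul_eq_mul]
    congr 2
    rw [Finset.card_erase_of_mem hb, Finset.card_erase_of_mem (mem_univ a),
      Finset.card_univ, Fintype.card_fin]
    omega
  rw [hrest]; ring

theorem my_sum_split3 {N : ℕ} (f : Fin N → ℂ) (a b d : Fin N) (hab : a ≠ b) (had : a ≠ d)
    (hbd : b ≠ d) (c : ℂ)
    (hc : ∀ x, x ≠ a → x ≠ b → x ≠ d → f x = c) :
    ∑ x, f x = f a + f b + f d + ((N - 3 : ℕ) : ℂ) * c := by
  have hb : b ∈ univ.erase a := Finset.mem_erase.mpr ⟨hab.symm, mem_univ b⟩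
  have hd : d ∈ (univ.erase a).erase b :=
    Finset.mem_erase.mpr ⟨hbd.symm, Finset.mem_erase.mpr ⟨had.symm, mem_univ d⟩⟩
  rw [← Finset.add_sum_erase _ f (mem_univ a), ← Finset.add_sum_erase _ f hb,
    ← Finset.add_sum_erase _ f hd]
  have hrest : ∑ x ∈ ((univ.erase a).erase b).erase d, f x = ((N - 3 : ℕ) : ℂ) * c := by
    have hconst : ∀ x ∈ ((univ.erase a).erase b).erase d, f x = c := by
      intro x hx
      obtain ⟨hxd, hx'⟩ := Finset.mem_erase.mp hx
      obtain ⟨hxb, hx''⟩ := Finset.mem_erase.mp hx'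
      exact hc x (Finset.mem_erase.mp hx'').1 hxb hxd
    rw [Finset.sum_congr rfl hconst, Finset.sum_const, nsmul_eq_mul]
    congr 2
    rw [Finset.card_erase_of_mem hd, Finset.card_erase_of_mem hb,
      Finset.card_erase_of_mem (mem_univ a), Finset.card_univ, Fintype.card_fin]
    omega
  rw [hrest]; ring

theorem my_relabel4 {N : ℕ} (u : Fin N → Fin N → A) (h : A →ₗ[ℂ] ℂ)
    (h_relabel : ∀ (n : ℕ) (is js : Fin n → Fin N) (σ τ : Equiv.Perm (Fin N)),
      h ((List.ofFn fun m => u (is m) (js m)).prod) =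
        h ((List.ofFn fun m => u (σ (is m)) (τ (js m))).prod))
    (σ τ : Equiv.Perm (Fin N)) (a b c d e f g i : Fin N) :
    h (u a b * u c d * u e f * u g i) =
      h (u (σ a) (τ b) * u (σ c) (τ d) * u (σ e) (τ f) * u (σ g) (τ i)) := by
  have := h_relabel 4 ![a, c, e, g] ![b, d, f, i] σ τ
  simpa [List.ofFn_succ, mul_assoc] using this


end aux



set_option maxHeartbeats 1600000 in
theorem haar_degree_four_bounds
    {A : Type*} [NormedRing A] [StarRing A] [CStarRing A] [NormedAlgebra ℂ A]
    (N : ℕ) (hN : 5 ≤ N)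
    (u : Fin N → Fin N → A)
    -- magic unitary: entries are projections, rows and columns sum to 1
    (hu_proj : ∀ i j, u i j * u i j = u i j ∧ star (u i j) = u i j)
    (hu_row : ∀ i, ∑ j, u i j = 1)
    (hu_col : ∀ j, ∑ i, u i j = 1)
    -- h is a faithful tracial state
    (h : A →ₗ[ℂ] ℂ)
    (h_one : h 1 = 1)
    (h_pos : ∀ a, ∃ r : ℝ, 0 ≤ r ∧ h (star a * a) = r)
    (h_tracial : ∀ a b, h (a * b) = h (b * a))
    (h_faithful : ∀ a, h (star a * a) = 0 → a = 0)
    -- invariance under relabeling by pairs of permutations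
    (h_relabel : ∀ (n : ℕ) (is js : Fin n → Fin N) (σ τ : Equiv.Perm (Fin N)),
      h ((List.ofFn fun m => u (is m) (js m)).prod) =
        h ((List.ofFn fun m => u (σ (is m)) (τ (js m))).prod))
    -- degree ≤ 3 moments
    (h_deg1 : ∀ i j, h (u i j) = 1 / (N : ℂ))
    (h_deg2 : ∀ i j k l, i ≠ k → j ≠ l →
      h (u i j * u k l) = 1 / ((N : ℂ) * ((N : ℂ) - 1)))
    (h_deg3 : ∀ i₁ i₂ i₃ j₁ j₂ j₃ : Fin N,
      i₁ ≠ i₂ → i₁ ≠ i₃ → i₂ ≠ i₃ → j₁ ≠ j₂ → j₁ ≠ j₃ → j₂ ≠ j₃ →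
      h (u i₁ j₁ * u i₂ j₂ * u i₃ j₃) =
        1 / ((N : ℂ) * ((N : ℂ) - 1) * ((N : ℂ) - 2)))
    -- positivity of α₁ = h(u₁₁u₂₂u₁₁u₂₂) and α₂ = h(u₁₁u₂₂u₁₁u₂₃)
    (h_α₁_pos : ∃ r : ℝ, 0 < r ∧
      h (u ⟨0, by omega⟩ ⟨0, by omega⟩ * u ⟨1, by omega⟩ ⟨1, by omega⟩ *
          u ⟨0, by omega⟩ ⟨0, by omega⟩ * u ⟨1, by omega⟩ ⟨1, by omega⟩) = r)
    (h_α₂_pos : ∃ r : ℝ, 0 < r ∧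
      h (u ⟨0, by omega⟩ ⟨0, by omega⟩ * u ⟨1, by omega⟩ ⟨1, by omega⟩ *
          u ⟨0, by omega⟩ ⟨0, by omega⟩ * u ⟨1, by omega⟩ ⟨2, by omega⟩) = r) :
    -- −(N−4)!/N! < α₄ < 0
    (∃ r : ℝ, h (u ⟨0, by omega⟩ ⟨0, by omega⟩ * u ⟨1, by omega⟩ ⟨1, by omega⟩ *
          u ⟨0, by omega⟩ ⟨2, by omega⟩ * u ⟨1, by omega⟩ ⟨3, by omega⟩) = r ∧
      -(((N - 4).factorial : ℝ) / (N.factorial : ℝ)) < r ∧ r < 0)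
    -- 0 < α₁ < (N−2)!/N!
    ∧ (∃ r : ℝ, h (u ⟨0, by omega⟩ ⟨0, by omega⟩ * u ⟨1, by omega⟩ ⟨1, by omega⟩ *
          u ⟨0, by omega⟩ ⟨0, by omega⟩ * u ⟨1, by omega⟩ ⟨1, by omega⟩) = r ∧
      0 < r ∧ r < ((N - 2).factorial : ℝ) / (N.factorial : ℝ))
    -- ((N−3)/(N−2))·(N−3)!/N! < α₃ < (N−3)!/N!
    ∧ (∃ r : ℝ, h (u ⟨0, by omega⟩ ⟨0, by omega⟩ * u ⟨1, by omega⟩ ⟨1, by omega⟩ *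
          u ⟨0, by omega⟩ ⟨0, by omega⟩ * u ⟨2, by omega⟩ ⟨2, by omega⟩) = r ∧
      (((N : ℝ) - 3) / ((N : ℝ) - 2)) * (((N - 3).factorial : ℝ) / (N.factorial : ℝ)) < r ∧
      r < ((N - 3).factorial : ℝ) / (N.factorial : ℝ)) := by
  
  classical
  set e0 : Fin N := ⟨0, by omega⟩ with he0
  set e1 : Fin N := ⟨1, by omega⟩ with he1
  set e2 : Fin N := ⟨2, by omega⟩ with he2
  set e3 : Fin N := ⟨3, by omega⟩ with he3
  have ne01 : e0 ≠ e1 := by simp [he0, he1, Fin.ext_iff]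
  have ne02 : e0 ≠ e2 := by simp [he0, he2, Fin.ext_iff]
  have ne03 : e0 ≠ e3 := by simp [he0, he3, Fin.ext_iff]
  have ne12 : e1 ≠ e2 := by simp [he1, he2, Fin.ext_iff]
  have ne13 : e1 ≠ e3 := by simp [he1, he3, Fin.ext_iff]
  have ne23 : e2 ≠ e3 := by simp [he2, he3, Fin.ext_iff]
  have row_orth : ∀ (i : Fin N) {j l : Fin N}, j ≠ l → u i j * u i l = 0 := fun i _ _ hjl =>
    my_proj_orth (u i) (hu_proj i) (hu_row i) h h_pos h_faithful _ _ hjl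
  have col_orth : ∀ (j : Fin N) {i k : Fin N}, i ≠ k → u i j * u k j = 0 := fun j _ _ hik =>
    my_proj_orth (fun i => u i j) (fun i => hu_proj i j) (hu_col j) h h_pos h_faithful _ _ hik
  have rel4 := my_relabel4 u h h_relabel
  have assoc4 : ∀ a b c d : A, a * (b * c * d) = a * b * c * d := fun a b c d => by
    rw [← mul_assoc, ← mul_assoc]
  have keyr : ∀ (M : A) (i : Fin N), ∑ l, h (M * u i l) = h M := by
    intro M i
    rw [← map_sum, ← Finset.mul_sum, hu_row, mul_one]
  have keyc : ∀ (M : A) (j : Fin N), ∑ k, h (M * u k j) = h M := by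
    intro M j
    rw [← map_sum, ← Finset.mul_sum, hu_col, mul_one]
  have hc2 : h (u e0 e0 * u e1 e1 * u e0 e0) = 1 / ((N:ℂ) * ((N:ℂ) - 1)) := by
    rw [h_tracial (u e0 e0 * u e1 e1) (u e0 e0), ← mul_assoc, (hu_proj e0 e0).1,
      h_deg2 e0 e0 e1 e1 ne01 ne01]
  have c2N : ((N - 2 : ℕ) : ℂ) = (N:ℂ) - 2 := by
    rw [Nat.cast_sub (by omega : 2 ≤ N)]; norm_num
  have c3N : ((N - 3 : ℕ) : ℂ) = (N:ℂ) - 3 := by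
    rw [Nat.cast_sub (by omega : 3 ≤ N)]; norm_num
  -- S1 : A1 + (N-2) A2 = c2
  have S1 : h (u e0 e0 * u e1 e1 * u e0 e0 * u e1 e1)
      + ((N:ℂ) - 2) * h (u e0 e0 * u e1 e1 * u e0 e0 * u e1 e2)
      = 1 / ((N:ℂ) * ((N:ℂ) - 1)) := by
    have hT0 : h (u e0 e0 * u e1 e1 * u e0 e0 * u e1 e0) = 0 := by
      rw [h_tracial (u e0 e0 * u e1 e1 * u e0 e0) (u e1 e0), assoc4,
        col_orth e0 ne01.symm, zero_mul, zero_mul, map_zero]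
    have hsplit : ∑ l, h (u e0 e0 * u e1 e1 * u e0 e0 * u e1 l)
        = h (u e0 e0 * u e1 e1 * u e0 e0 * u e1 e0)
          + h (u e0 e0 * u e1 e1 * u e0 e0 * u e1 e1)
          + ((N - 2 : ℕ) : ℂ) * h (u e0 e0 * u e1 e1 * u e0 e0 * u e1 e2) :=
      my_sum_split2 _ e0 e1 ne01 _ (by
        intro l hl0 hl1
        show h (u e0 e0 * u e1 e1 * u e0 e0 * u e1 l) = _
        have t0 : Equiv.swap l e2 e0 = e0 :=
          Equiv.swap_apply_of_ne_of_ne (Ne.symm hl0) ne02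
        have t1 : Equiv.swap l e2 e1 = e1 :=
          Equiv.swap_apply_of_ne_of_ne (Ne.symm hl1) ne12
        rw [rel4 (Equiv.refl _) (Equiv.swap l e2) e0 e0 e1 e1 e0 e0 e1 l]
        simp only [Equiv.refl_apply]
        rw [t0, t1, Equiv.swap_apply_left])
    rw [keyr (u e0 e0 * u e1 e1 * u e0 e0) e1, hT0, hc2, c2N] at hsplit
    linear_combination -hsplit
  -- S2 : A2 + (N-3) A4 = 0
  have S2 : h (u e0 e0 * u e1 e1 * u e0 e0 * u e1 e2)
      + ((N:ℂ) - 3) * h (u e0 e0 * u e1 e1 * u e0 e2 * u e1 e3) = 0 := by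
    have htr : ∀ k : Fin N, h (u e0 e0 * u e1 e1 * u e0 k * u e1 e2)
        = h (u e1 e2 * u e0 e0 * u e1 e1 * u e0 k) := by
      intro k
      rw [h_tracial (u e0 e0 * u e1 e1 * u e0 k) (u e1 e2), assoc4]
    have hzero : h (u e1 e2 * u e0 e0 * u e1 e1) = 0 := by
      rw [h_tracial (u e1 e2 * u e0 e0) (u e1 e1), ← mul_assoc, row_orth e1 ne12,
        zero_mul, map_zero]
    have hsum : ∑ k, h (u e0 e0 * u e1 e1 * u e0 k * u e1 e2) = 0 := by
      rw [Finset.sum_congr rfl fun k _ => htr k,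
        keyr (u e1 e2 * u e0 e0 * u e1 e1) e0, hzero]
    have hz1 : h (u e0 e0 * u e1 e1 * u e0 e1 * u e1 e2) = 0 := by
      rw [mul_assoc (u e0 e0) (u e1 e1) (u e0 e1), col_orth e1 ne01.symm, mul_zero,
        zero_mul, map_zero]
    have hz2 : h (u e0 e0 * u e1 e1 * u e0 e2 * u e1 e2) = 0 := by
      rw [mul_assoc (u e0 e0 * u e1 e1) (u e0 e2) (u e1 e2), col_orth e2 ne01, mul_zero,
        map_zero]
    have hsplit : ∑ k, h (u e0 e0 * u e1 e1 * u e0 k * u e1 e2)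
        = h (u e0 e0 * u e1 e1 * u e0 e0 * u e1 e2)
          + h (u e0 e0 * u e1 e1 * u e0 e1 * u e1 e2)
          + h (u e0 e0 * u e1 e1 * u e0 e2 * u e1 e2)
          + ((N - 3 : ℕ) : ℂ) * h (u e0 e0 * u e1 e1 * u e0 e2 * u e1 e3) :=
      my_sum_split3 _ e0 e1 e2 ne01 ne02 ne12 _ (by
        intro k hk0 hk1 hk2
        show h (u e0 e0 * u e1 e1 * u e0 k * u e1 e2) = _
        have t0 : ((Equiv.swap k e3).trans (Equiv.swap e2 e3)) e0 = e0 := by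
          rw [Equiv.trans_apply, Equiv.swap_apply_of_ne_of_ne (Ne.symm hk0) ne03,
            Equiv.swap_apply_of_ne_of_ne ne02 ne03]
        have t1 : ((Equiv.swap k e3).trans (Equiv.swap e2 e3)) e1 = e1 := by
          rw [Equiv.trans_apply, Equiv.swap_apply_of_ne_of_ne (Ne.symm hk1) ne13,
            Equiv.swap_apply_of_ne_of_ne ne12 ne13]
        have tk : ((Equiv.swap k e3).trans (Equiv.swap e2 e3)) k = e2 := by
          rw [Equiv.trans_apply, Equiv.swap_apply_left, Equiv.swap_apply_right]
        have t2 : ((Equiv.swap k e3).trans (Equiv.swap e2 e3)) e2 = e3 := by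
          rw [Equiv.trans_apply, Equiv.swap_apply_of_ne_of_ne (Ne.symm hk2) ne23,
            Equiv.swap_apply_left]
        rw [rel4 (Equiv.refl _) ((Equiv.swap k e3).trans (Equiv.swap e2 e3))
          e0 e0 e1 e1 e0 k e1 e2]
        simp only [Equiv.refl_apply]
        rw [t0, t1, tk, t2])
    rw [hsum, hz1, hz2, c3N] at hsplit
    linear_combination -hsplit
  -- S3 : A1 + (N-2) G = c2
  have S3 : h (u e0 e0 * u e1 e1 * u e0 e0 * u e1 e1)
      + ((N:ℂ) - 2) * h (u e0 e0 * u e1 e1 * u e0 e0 * u e2 e1)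
      = 1 / ((N:ℂ) * ((N:ℂ) - 1)) := by
    have hz : h (u e0 e0 * u e1 e1 * u e0 e0 * u e0 e1) = 0 := by
      rw [mul_assoc (u e0 e0 * u e1 e1) (u e0 e0) (u e0 e1), row_orth e0 ne01, mul_zero,
        map_zero]
    have hsplit : ∑ k, h (u e0 e0 * u e1 e1 * u e0 e0 * u k e1)
        = h (u e0 e0 * u e1 e1 * u e0 e0 * u e0 e1)
          + h (u e0 e0 * u e1 e1 * u e0 e0 * u e1 e1)
          + ((N - 2 : ℕ) : ℂ) * h (u e0 e0 * u e1 e1 * u e0 e0 * u e2 e1) :=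
      my_sum_split2 _ e0 e1 ne01 _ (by
        intro k hk0 hk1
        show h (u e0 e0 * u e1 e1 * u e0 e0 * u k e1) = _
        have t0 : Equiv.swap k e2 e0 = e0 :=
          Equiv.swap_apply_of_ne_of_ne (Ne.symm hk0) ne02
        have t1 : Equiv.swap k e2 e1 = e1 :=
          Equiv.swap_apply_of_ne_of_ne (Ne.symm hk1) ne12
        rw [rel4 (Equiv.swap k e2) (Equiv.refl _) e0 e0 e1 e1 e0 e0 k e1]
        simp only [Equiv.refl_apply]
        rw [t0, t1, Equiv.swap_apply_left])
    rw [keyc (u e0 e0 * u e1 e1 * u e0 e0) e1, hz, hc2, c2N] at hsplit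
    linear_combination -hsplit
  -- G = E
  have hEG : h (u e0 e0 * u e1 e1 * u e0 e0 * u e2 e1)
      = h (u e0 e0 * u e1 e1 * u e0 e0 * u e3 e1) := by
    have t0 : Equiv.swap e2 e3 e0 = e0 := Equiv.swap_apply_of_ne_of_ne ne02 ne03
    have t1 : Equiv.swap e2 e3 e1 = e1 := Equiv.swap_apply_of_ne_of_ne ne12 ne13
    rw [rel4 (Equiv.swap e2 e3) (Equiv.refl _) e0 e0 e1 e1 e0 e0 e2 e1]
    simp only [Equiv.refl_apply]
    rw [t0, t1, Equiv.swap_apply_left]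
  -- S4 : E + (N-2) D = c2
  have S4 : h (u e0 e0 * u e1 e1 * u e0 e0 * u e3 e1)
      + ((N:ℂ) - 2) * h (u e0 e0 * u e1 e1 * u e0 e0 * u e3 e2)
      = 1 / ((N:ℂ) * ((N:ℂ) - 1)) := by
    have hz : h (u e0 e0 * u e1 e1 * u e0 e0 * u e3 e0) = 0 := by
      rw [h_tracial (u e0 e0 * u e1 e1 * u e0 e0) (u e3 e0), assoc4,
        col_orth e0 ne03.symm, zero_mul, zero_mul, map_zero]
    have hsplit : ∑ l, h (u e0 e0 * u e1 e1 * u e0 e0 * u e3 l)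
        = h (u e0 e0 * u e1 e1 * u e0 e0 * u e3 e0)
          + h (u e0 e0 * u e1 e1 * u e0 e0 * u e3 e1)
          + ((N - 2 : ℕ) : ℂ) * h (u e0 e0 * u e1 e1 * u e0 e0 * u e3 e2) :=
      my_sum_split2 _ e0 e1 ne01 _ (by
        intro l hl0 hl1
        show h (u e0 e0 * u e1 e1 * u e0 e0 * u e3 l) = _
        have t0 : Equiv.swap l e2 e0 = e0 :=
          Equiv.swap_apply_of_ne_of_ne (Ne.symm hl0) ne02
        have t1 : Equiv.swap l e2 e1 = e1 :=
          Equiv.swap_apply_of_ne_of_ne (Ne.symm hl1) ne12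
        rw [rel4 (Equiv.refl _) (Equiv.swap l e2) e0 e0 e1 e1 e0 e0 e3 l]
        simp only [Equiv.refl_apply]
        rw [t0, t1, Equiv.swap_apply_left])
    rw [keyr (u e0 e0 * u e1 e1 * u e0 e0) e3, hz, hc2, c2N] at hsplit
    linear_combination -hsplit
  -- S5 : A2 + A3 + (N-3) D = c2
  have S5 : h (u e0 e0 * u e1 e1 * u e0 e0 * u e1 e2)
      + h (u e0 e0 * u e1 e1 * u e0 e0 * u e2 e2)
      + ((N:ℂ) - 3) * h (u e0 e0 * u e1 e1 * u e0 e0 * u e3 e2)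
      = 1 / ((N:ℂ) * ((N:ℂ) - 1)) := by
    have hz : h (u e0 e0 * u e1 e1 * u e0 e0 * u e0 e2) = 0 := by
      rw [mul_assoc (u e0 e0 * u e1 e1) (u e0 e0) (u e0 e2), row_orth e0 ne02, mul_zero,
        map_zero]
    have hsplit : ∑ k, h (u e0 e0 * u e1 e1 * u e0 e0 * u k e2)
        = h (u e0 e0 * u e1 e1 * u e0 e0 * u e0 e2)
          + h (u e0 e0 * u e1 e1 * u e0 e0 * u e1 e2)
          + h (u e0 e0 * u e1 e1 * u e0 e0 * u e2 e2)
          + ((N - 3 : ℕ) : ℂ) * h (u e0 e0 * u e1 e1 * u e0 e0 * u e3 e2) :=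
      my_sum_split3 _ e0 e1 e2 ne01 ne02 ne12 _ (by
        intro k hk0 hk1 hk2
        show h (u e0 e0 * u e1 e1 * u e0 e0 * u k e2) = _
        have t0 : Equiv.swap k e3 e0 = e0 :=
          Equiv.swap_apply_of_ne_of_ne (Ne.symm hk0) ne03
        have t1 : Equiv.swap k e3 e1 = e1 :=
          Equiv.swap_apply_of_ne_of_ne (Ne.symm hk1) ne13
        rw [rel4 (Equiv.swap k e3) (Equiv.refl _) e0 e0 e1 e1 e0 e0 k e2]
        simp only [Equiv.refl_apply]
        rw [t0, t1, Equiv.swap_apply_left])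
    rw [keyc (u e0 e0 * u e1 e1 * u e0 e0) e2, hz, hc2, c3N] at hsplit
    linear_combination -hsplit
  -- extract reals
  obtain ⟨r₁, hr1pos, hr1⟩ := h_α₁_pos
  obtain ⟨r₂, hr2pos, hr2⟩ := h_α₂_pos
  have hA1 : h (u e0 e0 * u e1 e1 * u e0 e0 * u e1 e1) = (r₁ : ℂ) := hr1
  have hA2 : h (u e0 e0 * u e1 e1 * u e0 e0 * u e1 e2) = (r₂ : ℂ) := hr2
  have hx5 : (5:ℝ) ≤ (N:ℝ) := by exact_mod_cast hN
  have hxr0 : (0:ℝ) < (N:ℝ) := by linarith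
  have h1r : (0:ℝ) < (N:ℝ) - 1 := by linarith
  have h2r : (0:ℝ) < (N:ℝ) - 2 := by linarith
  have h3r : (0:ℝ) < (N:ℝ) - 3 := by linarith
  have hcast2 : ((N:ℂ) - 2) = (((N:ℝ) - 2 : ℝ) : ℂ) := by push_cast; ring
  have hcast3 : ((N:ℂ) - 3) = (((N:ℝ) - 3 : ℝ) : ℂ) := by push_cast; ring
  have hN2c : ((N:ℂ) - 2) ≠ 0 := by rw [hcast2]; exact_mod_cast h2r.ne'
  have hN3c : ((N:ℂ) - 3) ≠ 0 := by rw [hcast3]; exact_mod_cast h3r.ne'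
  have h12 : ((N:ℂ) - 2) * h (u e0 e0 * u e1 e1 * u e0 e0 * u e2 e1)
      = ((N:ℂ) - 2) * h (u e0 e0 * u e1 e1 * u e0 e0 * u e1 e2) := by
    linear_combination S3 - S1
  have hE : h (u e0 e0 * u e1 e1 * u e0 e0 * u e3 e1) = (r₂ : ℂ) := by
    rw [← hEG, mul_left_cancel₀ hN2c h12]; exact hA2
  have hD : ((N:ℂ) - 2) * h (u e0 e0 * u e1 e1 * u e0 e0 * u e3 e2)
      = 1 / ((N:ℂ) * ((N:ℂ) - 1)) - (r₂ : ℂ) := by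
    linear_combination S4 - hE
  have hA3c : ((N:ℂ) - 2) * h (u e0 e0 * u e1 e1 * u e0 e0 * u e2 e2)
      = 1 / ((N:ℂ) * ((N:ℂ) - 1)) - (r₂ : ℂ) := by
    linear_combination ((N:ℂ) - 2) * S5 - ((N:ℂ) - 3) * hD - ((N:ℂ) - 2) * hA2
  have hA4c : ((N:ℂ) - 3) * h (u e0 e0 * u e1 e1 * u e0 e2 * u e1 e3) = -(r₂ : ℂ) := by
    linear_combination S2 - hA2
  have hA4 : h (u e0 e0 * u e1 e1 * u e0 e2 * u e1 e3) = ((-r₂ / ((N:ℝ) - 3) : ℝ) : ℂ) := by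
    apply mul_left_cancel₀ hN3c
    rw [hA4c, hcast3, ← Complex.ofReal_mul,
      show ((N:ℝ) - 3) * (-r₂ / ((N:ℝ) - 3)) = -r₂ from by field_simp, Complex.ofReal_neg]
  have hA3 : h (u e0 e0 * u e1 e1 * u e0 e0 * u e2 e2)
      = (((1 / ((N:ℝ) * ((N:ℝ) - 1)) - r₂) / ((N:ℝ) - 2) : ℝ) : ℂ) := by
    apply mul_left_cancel₀ hN2c
    rw [hA3c, hcast2, ← Complex.ofReal_mul,
      show ((N:ℝ) - 2) * ((1 / ((N:ℝ) * ((N:ℝ) - 1)) - r₂) / ((N:ℝ) - 2))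
        = 1 / ((N:ℝ) * ((N:ℝ) - 1)) - r₂ from by field_simp]
    push_cast
    ring
  have hE1 : r₁ + ((N:ℝ) - 2) * r₂ = 1 / ((N:ℝ) * ((N:ℝ) - 1)) := by
    have hcx : ((r₁ + ((N:ℝ) - 2) * r₂ : ℝ) : ℂ) = ((1 / ((N:ℝ) * ((N:ℝ) - 1)) : ℝ) : ℂ) := by
      push_cast
      linear_combination S1 - hA1 - ((N:ℂ) - 2) * hA2
    exact_mod_cast hcx
  have hp2 : (0:ℝ) < (N:ℝ) * ((N:ℝ) - 1) := mul_pos hxr0 h1r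
  have hp3 : (0:ℝ) < (N:ℝ) * ((N:ℝ) - 1) * ((N:ℝ) - 2) := mul_pos hp2 h2r
  have hp4 : (0:ℝ) < (N:ℝ) * ((N:ℝ) - 1) * ((N:ℝ) - 2) * ((N:ℝ) - 3) := mul_pos hp3 h3r
  have hr2lt' : r₂ * ((N:ℝ) * ((N:ℝ) - 1) * ((N:ℝ) - 2)) < 1 := by
    have h' : ((N:ℝ) - 2) * r₂ < 1 / ((N:ℝ) * ((N:ℝ) - 1)) := by linarith
    rw [lt_div_iff₀ hp2] at h'
    nlinarith [h']
  have hr2lt : r₂ < 1 / ((N:ℝ) * ((N:ℝ) - 1) * ((N:ℝ) - 2)) := by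
    rw [lt_div_iff₀ hp3]; exact hr2lt'
  have hx0' : (N:ℝ) ≠ 0 := hxr0.ne'
  have hx1' : (N:ℝ) - 1 ≠ 0 := h1r.ne'
  have hx2' : (N:ℝ) - 2 ≠ 0 := h2r.ne'
  refine ⟨⟨-r₂ / ((N:ℝ) - 3), hA4, ?_, ?_⟩, ⟨r₁, hr1, hr1pos, ?_⟩,
    ⟨(1 / ((N:ℝ) * ((N:ℝ) - 1)) - r₂) / ((N:ℝ) - 2), hA3, ?_, ?_⟩⟩
  · rw [my_fact_ratio4 N hN, neg_div]
    apply neg_lt_neg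
    rw [div_lt_div_iff₀ h3r hp4]
    nlinarith [mul_lt_mul_of_pos_right hr2lt' h3r]
  · exact div_neg_of_neg_of_pos (neg_lt_zero.mpr hr2pos) h3r
  · rw [my_fact_ratio2 N hN]
    nlinarith [mul_pos h2r hr2pos]
  · rw [my_fact_ratio3 N hN,
      show ((N:ℝ) - 3) / ((N:ℝ) - 2) * (1 / ((N:ℝ) * ((N:ℝ) - 1) * ((N:ℝ) - 2)))
        = (1 / ((N:ℝ) * ((N:ℝ) - 1)) - 1 / ((N:ℝ) * ((N:ℝ) - 1) * ((N:ℝ) - 2))) / ((N:ℝ) - 2)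
        from by field_simp; ring]
    exact (div_lt_div_iff_of_pos_right h2r).mpr (by linarith)
  · rw [my_fact_ratio3 N hN,
      show 1 / ((N:ℝ) * ((N:ℝ) - 1) * ((N:ℝ) - 2))
        = (1 / ((N:ℝ) * ((N:ℝ) - 1))) / ((N:ℝ) - 2) from by field_simp]
    exact (div_lt_div_iff_of_pos_right h2r).mpr (by linarith)
end
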